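/- Let K ⊆ ℝ³ be a regular convex cone that is invariant under the one-parameter group generated by the matrix A = [[1,1,0],[0,1,0],[0,0,0]], i.e., exp(tA)[K] = K for all t ∈ ℝ. Then K is isomorphic to the exponential cone K_exp. -/

import Mathlib

open Matrix Set

/-- A regular convex cone: closed, convex, invariant under positive scalings,
with nonempty interior, containing no line (pointed). -/
def IsRegularCone {n : ℕ} (K : Set (Fin n → ℝ)) : Prop :=
  IsClosed K ∧ Convex ℝ K ∧ (∀ c : ℝ, 0 < c → ∀ x ∈ K, c • x ∈ K) ∧
    (interior K).Nonempty ∧ ∀ x ∈ K, -x ∈ K → x = 0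

/-- Two cones in ℝ³ are isomorphic if a linear automorphism maps one onto the other. -/
def ConeIso (K K' : Set (Fin 3 → ℝ)) : Prop :=
  ∃ S : Matrix (Fin 3) (Fin 3) ℝ, IsUnit S.det ∧ (fun v => S.mulVec v) '' K = K'

/-- The exponential cone, the homogenization of the epigraph of the exponential function. -/
def ExpCone : Set (Fin 3 → ℝ) :=
  {v | (v 2 = 0 ∧ v 0 ≤ 0 ∧ 0 ≤ v 1) ∨ (0 < v 2 ∧ v 2 * Real.exp (v 0 / v 2) ≤ v 1)}

lemma v3_0 (a b c : ℝ) : (![a,b,c]) 0 = a := rfl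
lemma v3_1 (a b c : ℝ) : (![a,b,c]) 1 = b := rfl
lemma v3_2 (a b c : ℝ) : (![a,b,c]) 2 = c := rfl

lemma memK_congr {K : Set (Fin 3 → ℝ)} {a b : Fin 3 → ℝ} (h : a ∈ K)
    (e : ∀ i, a i = b i) : b ∈ K := by
  have : a = b := funext e
  rwa [this] at h

lemma expQuad (u : ℝ) (hu : 0 ≤ u) : u^2/4 ≤ Real.exp u := by
  have h := Real.add_one_le_exp (u/2)
  have h2 : Real.exp (u/2) * Real.exp (u/2) = Real.exp u := by
    rw [← Real.exp_add]; ring_nf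
  nlinarith [mul_le_mul h h (by linarith) (Real.exp_pos (u/2)).le]

lemma core (K : Set (Fin 3 → ℝ)) (hcl : IsClosed K) (hconv : Convex ℝ K)
    (hsc : ∀ c : ℝ, 0 < c → ∀ x ∈ K, c • x ∈ K)
    (hint : (interior K).Nonempty)
    (hpt : ∀ x ∈ K, -x ∈ K → x = 0)
    (hT : ∀ t : ℝ, ∀ v ∈ K, ![v 0 + t * v 1, v 1, Real.exp (-t) * v 2] ∈ K)
    (hE0 : ∀ v ∈ K, ![0, 0, v 2] ∈ K)
    (hray : ∀ v ∈ K, ![v 1, 0, 0] ∈ K)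
    (hy : ∀ v ∈ K, 0 ≤ v 1) (hz : ∀ v ∈ K, 0 ≤ v 2) :
    ∃ l : ℝ, 0 < l ∧ ∀ v : Fin 3 → ℝ,
      (v ∈ K ↔ (v 1 = 0 ∧ 0 ≤ v 0 ∧ 0 ≤ v 2) ∨
        (0 < v 1 ∧ l * v 1 * Real.exp (-(v 0 / v 1)) ≤ v 2)) := by
  classical
  obtain ⟨u, hu⟩ := hint
  have huK : u ∈ K := interior_subset hu
  obtain ⟨ε, hε, hball⟩ := Metric.mem_nhds_iff.mp (mem_interior_iff_mem_nhds.mp hu)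
  -- 0 ∈ K
  have h0K : (0 : Fin 3 → ℝ) ∈ K := by
    have hmem : ∀ n : ℕ, ((n:ℝ)+1)⁻¹ • u ∈ K := fun n =>
      hsc _ (by positivity) _ huK
    have htd : Filter.Tendsto (fun n : ℕ => ((n:ℝ)+1)⁻¹ • u) Filter.atTop (nhds 0) := by
      have h := tendsto_one_div_add_atTop_nhds_zero_nat.congr
        (fun n : ℕ => one_div ((n:ℝ)+1))
      simpa using h.smul_const u
    exact hcl.mem_of_tendsto htd (Filter.Eventually.of_forall hmem)
  have hsc' : ∀ c : ℝ, 0 ≤ c → ∀ x ∈ K, c • x ∈ K := by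
    intro c hc x hx
    rcases hc.eq_or_lt with h | h
    · simpa [← h] using h0K
    · exact hsc c h x hx
  have hadd : ∀ v ∈ K, ∀ w ∈ K, v + w ∈ K := by
    intro v hv w hw
    have h := hconv hv hw (by norm_num : (0:ℝ) ≤ 1/2) (by norm_num : (0:ℝ) ≤ 1/2)
      (by norm_num)
    have h2 := hsc 2 (by norm_num) _ h
    have he : (2:ℝ) • ((1/2 : ℝ) • v + (1/2 : ℝ) • w) = v + w := by
      rw [smul_add, smul_smul, smul_smul]; norm_num
    rwa [he] at h2
  -- perturbations of the interior point
  have hpert : ∀ w : Fin 3 → ℝ, (∀ i, ‖w i‖ ≤ 1) → u + (ε/2) • w ∈ K := by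
    intro w hw
    apply hball
    rw [Metric.mem_ball, dist_eq_norm, add_sub_cancel_left, norm_smul, Real.norm_eq_abs,
      abs_of_pos (by linarith : (0:ℝ) < ε/2)]
    have hwn : ‖w‖ ≤ 1 := (pi_norm_le_iff_of_nonneg zero_le_one).mpr hw
    nlinarith [norm_nonneg w]
  obtain ⟨p2, hp2K, hp21⟩ : ∃ p ∈ K, 0 < p 1 := by
    refine ⟨u + (ε/2) • ![0,1,0], hpert _ ?_, ?_⟩
    · intro i; fin_cases i <;> simp [v3_0, v3_1, v3_2]
    · have := hy u huK
      simp only [Pi.add_apply, Pi.smul_apply, v3_1, smul_eq_mul, mul_one]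
      linarith
  obtain ⟨p3, hp3K, hp32⟩ : ∃ p ∈ K, 0 < p 2 := by
    refine ⟨u + (ε/2) • ![0,0,1], hpert _ ?_, ?_⟩
    · intro i; fin_cases i <;> simp [v3_0, v3_1, v3_2]
    · have := hz u huK
      simp only [Pi.add_apply, Pi.smul_apply, v3_2, smul_eq_mul, mul_one]
      linarith
  -- e3 and e1
  have he3 : (![0,0,1] : Fin 3 → ℝ) ∈ K := by
    refine memK_congr (hsc (p3 2)⁻¹ (inv_pos.mpr hp32) _ (hE0 p3 hp3K)) fun i => ?_
    fin_cases i <;>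
      simp [v3_0, v3_1, v3_2, inv_mul_cancel₀ hp32.ne']
  have he1 : (![1,0,0] : Fin 3 → ℝ) ∈ K := by
    refine memK_congr (hsc (p2 1)⁻¹ (inv_pos.mpr hp21) _ (hray p2 hp2K)) fun i => ?_
    fin_cases i <;>
      simp [v3_0, v3_1, v3_2, inv_mul_cancel₀ hp21.ne']
  have hup : ∀ v ∈ K, ∀ c : ℝ, 0 ≤ c → v + c • ![0,0,1] ∈ K := fun v hv c hc =>
    hadd v hv _ (hsc' c hc _ he3)
  -- the slice set
  set S0 : Set ℝ := {z : ℝ | (![0,1,z] : Fin 3 → ℝ) ∈ K} with hS0def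
  have hS0ne : S0.Nonempty := by
    have hq := hsc (p2 1)⁻¹ (inv_pos.mpr hp21) _ hp2K
    set q := (p2 1)⁻¹ • p2 with hqdef
    have hq1 : q 1 = 1 := by
      simp [hqdef, Pi.smul_apply, smul_eq_mul, inv_mul_cancel₀ hp21.ne']
    refine ⟨Real.exp (q 0) * q 2, ?_⟩
    show (![0, 1, Real.exp (q 0) * q 2] : Fin 3 → ℝ) ∈ K
    refine memK_congr (hT (-(q 0)) q hq) fun i => ?_
    fin_cases i <;> simp [v3_0, v3_1, v3_2, hq1] <;> ring
  have hS0bdd : BddBelow S0 := ⟨0, fun z hz' => by simpa [v3_2] using hz _ hz'⟩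
  have hgeq : (fun z : ℝ => (![0,1,z] : Fin 3 → ℝ))
      = fun z => (![0,1,0] : Fin 3 → ℝ) + z • ![0,0,1] := by
    funext z i; fin_cases i <;> simp [v3_0, v3_1, v3_2]
  have hgcont : Continuous (fun z : ℝ => (![0,1,z] : Fin 3 → ℝ)) := by
    rw [hgeq]; exact continuous_const.add (continuous_id.smul continuous_const)
  have hS0cl : IsClosed S0 := hcl.preimage hgcont
  set l := sInf S0 with hldef
  have hlS0 : (![0,1,l] : Fin 3 → ℝ) ∈ K := hS0cl.csInf_mem hS0ne hS0bdd
  have hl0 : 0 ≤ l := le_csInf hS0ne fun z hz' => by simpa [v3_2] using hz _ hz'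
  have hlpos : 0 < l := by
    rcases hl0.eq_or_lt with h | h
    · exfalso
      have h010 : (![0,1,0] : Fin 3 → ℝ) ∈ K := by rw [← h] at hlS0; exact hlS0
      have hmem : ∀ s : ℝ, 0 < s → (![-1, s⁻¹, 0] : Fin 3 → ℝ) ∈ K := by
        intro s hs
        refine memK_congr (hsc s⁻¹ (inv_pos.mpr hs) _ (hT (-s) _ h010)) fun i => ?_
        fin_cases i <;>
          simp [v3_0, v3_1, v3_2, Pi.smul_apply, smul_eq_mul] <;>
          field_simp
      have htd : Filter.Tendsto (fun s : ℝ => (![-1, s⁻¹, 0] : Fin 3 → ℝ))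
          Filter.atTop (nhds ![-1, 0, 0]) := by
        rw [tendsto_pi_nhds]
        intro i; fin_cases i
        · simpa [v3_0] using (tendsto_const_nhds : Filter.Tendsto (fun _ : ℝ => (-1:ℝ)) _ _)
        · simpa [v3_1] using tendsto_inv_atTop_zero
        · simpa [v3_2] using (tendsto_const_nhds : Filter.Tendsto (fun _ : ℝ => (0:ℝ)) _ _)
      have hlim : (![-1,0,0] : Fin 3 → ℝ) ∈ K :=
        hcl.mem_of_tendsto htd ((Filter.eventually_gt_atTop 0).mono fun s hs => hmem s hs)
      have h10 : -(![1,0,0] : Fin 3 → ℝ) ∈ K := by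
        have e : -(![1,0,0] : Fin 3 → ℝ) = ![-1,0,0] := by
          funext i; fin_cases i <;> simp [v3_0, v3_1, v3_2]
        rwa [e]
      have hzero := hpt _ he1 h10
      have h1 : (1:ℝ) = 0 := by simpa [v3_0] using congrFun hzero 0
      norm_num at h1
    · exact h
  -- slice characterization
  have hslice : ∀ x z : ℝ, (![x,1,z] : Fin 3 → ℝ) ∈ K ↔ l * Real.exp (-x) ≤ z := by
    intro x z
    constructor
    · intro hxz
      have h1 : (![0, 1, Real.exp x * z] : Fin 3 → ℝ) ∈ K := by
        refine memK_congr (hT (-x) _ hxz) fun i => ?_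
        fin_cases i <;> simp [v3_0, v3_1, v3_2] <;> ring
      have h3 : l ≤ Real.exp x * z := csInf_le hS0bdd h1
      have h4 : Real.exp x * Real.exp (-x) = 1 := by rw [← Real.exp_add]; simp
      calc l * Real.exp (-x) ≤ (Real.exp x * z) * Real.exp (-x) :=
            mul_le_mul_of_nonneg_right h3 (Real.exp_pos (-x)).le
        _ = z * (Real.exp x * Real.exp (-x)) := by ring
        _ = z := by rw [h4, mul_one]
    · intro hle
      have h2 := hup _ (hT x _ hlS0) (z - l * Real.exp (-x)) (by linarith)
      refine memK_congr h2 fun i => ?_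
      fin_cases i <;> simp [v3_0, v3_1, v3_2, Pi.add_apply, Pi.smul_apply, smul_eq_mul] <;> ring
  -- characterization for positive second coordinate
  have hchar : ∀ v : Fin 3 → ℝ, 0 < v 1 →
      (v ∈ K ↔ l * v 1 * Real.exp (-(v 0 / v 1)) ≤ v 2) := by
    intro v hv1
    constructor
    · intro hv
      have h1 : (![v 0 / v 1, 1, v 2 / v 1] : Fin 3 → ℝ) ∈ K := by
        refine memK_congr (hsc (v 1)⁻¹ (inv_pos.mpr hv1) _ hv) fun i => ?_
        fin_cases i <;>
          simp [v3_0, v3_1, v3_2, Pi.smul_apply, smul_eq_mul,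
            inv_mul_cancel₀ hv1.ne', div_eq_inv_mul]
      have h2 := (hslice _ _).mp h1
      rw [le_div_iff₀ hv1] at h2
      rw [mul_right_comm] at h2
      exact h2
    · intro hle
      have h2 : l * Real.exp (-(v 0 / v 1)) ≤ v 2 / v 1 := by
        rw [le_div_iff₀ hv1, mul_right_comm]; exact hle
      have h1 := (hslice (v 0 / v 1) (v 2 / v 1)).mpr h2
      refine memK_congr (hsc (v 1) hv1 _ h1) fun i => ?_
      fin_cases i <;>
        simp [v3_0, v3_1, v3_2, Pi.smul_apply, smul_eq_mul, mul_div_cancel₀, hv1.ne']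
  -- the face y = 0
  have hface : ∀ v ∈ K, v 1 = 0 → 0 ≤ v 0 := by
    intro v hv hv1
    by_contra hx
    push_neg at hx
    have hv2 : 0 ≤ v 2 := hz v hv
    have h02 : 0 < (v 0)^2 := by nlinarith
    set d : ℝ := min 1 (l * (v 0)^2 / (4 * (v 2 + l + 1))) with hddef
    have hdpos : 0 < d :=
      lt_min one_pos (div_pos (by positivity) (by positivity))
    have hd1 : d ≤ 1 := min_le_left _ _
    have hd2 : d ≤ l * (v 0)^2 / (4 * (v 2 + l + 1)) := min_le_right _ _
    have hwK : v + d • ![0,1,l] ∈ K := hadd v hv _ (hsc' d hdpos.le _ hlS0)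
    have hw0 : (v + d • ![0,1,l]) 0 = v 0 := by
      simp [v3_0, Pi.add_apply, Pi.smul_apply]
    have hw1 : (v + d • ![0,1,l]) 1 = d := by
      simp [v3_1, Pi.add_apply, Pi.smul_apply, hv1]
    have hw2 : (v + d • ![0,1,l]) 2 = v 2 + d * l := by
      simp [v3_2, Pi.add_apply, Pi.smul_apply]
    have hineq := (hchar _ (by rw [hw1]; exact hdpos)).mp hwK
    rw [hw0, hw1, hw2] at hineq
    have heq : -(v 0 / d) = -(v 0) / d := by ring
    rw [heq] at hineq
    have hexp : (-(v 0) / d)^2 / 4 ≤ Real.exp (-(v 0) / d) :=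
      expQuad _ (div_nonneg (by linarith) hdpos.le)
    have hb : l * d * ((-(v 0)/d)^2/4) ≤ v 2 + d * l :=
      le_trans (mul_le_mul_of_nonneg_left hexp (by positivity)) hineq
    have hbeq : l * d * ((-(v 0)/d)^2/4) = l * (v 0)^2 / (4*d) := by
      field_simp
    rw [hbeq] at hb
    rw [le_div_iff₀ (by positivity : (0:ℝ) < 4 * (v 2 + l + 1))] at hd2
    rw [div_le_iff₀ (by positivity : (0:ℝ) < 4 * d)] at hb
    have hdl : d * l ≤ l := by nlinarith
    nlinarith [mul_pos hdpos (by linarith : (0:ℝ) < l + 1 - d * l)]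
  -- conclusion
  refine ⟨l, hlpos, fun v => ?_⟩
  constructor
  · intro hv
    rcases (hy v hv).eq_or_lt with h1 | h1
    · exact Or.inl ⟨h1.symm, hface v hv h1.symm, hz v hv⟩
    · exact Or.inr ⟨h1, (hchar v h1).mp hv⟩
  · rintro (⟨h1, h2, h3⟩ | ⟨h1, h2⟩)
    · have he : v = v 0 • ![1,0,0] + v 2 • ![0,0,1] := by
        funext i
        fin_cases i <;> simp [v3_0, v3_1, v3_2, Pi.add_apply, Pi.smul_apply, h1]
      rw [he]
      exact hadd _ (hsc' _ h2 _ he1) _ (hsc' _ h3 _ he3)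
    · exact (hchar v h1).mpr h2


lemma exp_of_sq_zero (M : Matrix (Fin 3) (Fin 3) ℝ) (h : M * M = 0) :
    NormedSpace.exp M = 1 + M := by
  simp only [NormedSpace.exp_eq_tsum (𝕂 := ℝ)]
  have hpow : ∀ n : ℕ, 2 ≤ n → M ^ n = 0 := by
    intro n hn
    have h2 : M ^ n = M ^ 2 * M ^ (n - 2) := by
      rw [← pow_add]; congr 1; omega
    rw [h2, pow_two, h, zero_mul]
  rw [tsum_eq_sum (s := {0, 1}) ?_]
  · norm_num [Finset.sum_pair]
  · intro n hn
    have : 2 ≤ n := by simp at hn; omega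
    rw [hpow n this, smul_zero]

lemma exp_jordan (t : ℝ) :
    NormedSpace.exp (t • (!![1,1,0;0,1,0;0,0,0] : Matrix (Fin 3) (Fin 3) ℝ)) =
      !![Real.exp t, t * Real.exp t, 0; 0, Real.exp t, 0; 0, 0, 1] := by
  have hsplit : t • (!![1,1,0;0,1,0;0,0,0] : Matrix (Fin 3) (Fin 3) ℝ)
      = Matrix.diagonal ![t,t,0] + !![0,t,0;0,0,0;0,0,0] := by
    ext i j; fin_cases i <;> fin_cases j <;>
      norm_num [Matrix.diagonal_apply, Matrix.vecHead, Matrix.vecTail, Fin.ext_iff]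
  have hcomm : Commute (Matrix.diagonal ![t,t,0])
      (!![0,t,0;0,0,0;0,0,0] : Matrix (Fin 3) (Fin 3) ℝ) := by
    unfold Commute SemiconjBy
    ext i j
    fin_cases i <;> fin_cases j <;>
      norm_num [Matrix.mul_apply, Fin.sum_univ_three, Matrix.diagonal_apply,
        Matrix.vecHead, Matrix.vecTail]
  have hN : (!![0,t,0;0,0,0;0,0,0] : Matrix (Fin 3) (Fin 3) ℝ) * !![0,t,0;0,0,0;0,0,0] = 0 := by
    ext i j; fin_cases i <;> fin_cases j <;>
      simp [Matrix.mul_apply, Fin.sum_univ_three]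
  have hadd := Matrix.exp_add_of_commute (Matrix.diagonal ![t,t,0])
    (!![0,t,0;0,0,0;0,0,0]) hcomm
  rw [hsplit, hadd, Matrix.exp_diagonal, exp_of_sq_zero _ hN]
  ext i j
  fin_cases i <;> fin_cases j <;>
    simp [Matrix.mul_apply, Fin.sum_univ_three, Matrix.diagonal_apply, Pi.exp_def,
      ← Real.exp_eq_exp_ℝ, Real.exp_zero, Matrix.one_apply, Matrix.vecHead, Matrix.vecTail, mul_comm]

lemma Emulvec (t : ℝ) (v : Fin 3 → ℝ) :
    (!![Real.exp t, t*Real.exp t, 0; 0, Real.exp t, 0; 0,0,1] : Matrix (Fin 3) (Fin 3) ℝ).mulVec v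
      = ![Real.exp t * v 0 + t*Real.exp t * v 1, Real.exp t * v 1, v 2] := by
  funext i; fin_cases i <;> simp [Matrix.mulVec, dotProduct, Fin.sum_univ_three]

/-- a regular convex cone in ℝ³ invariant under the one-parameter group
generated by [[1,1,0],[0,1,0],[0,0,0]] is isomorphic to the exponential cone. -/
theorem cone_invariant_jordan_block_is_exp (K : Set (Fin 3 → ℝ)) (hK : IsRegularCone K)
    (hinv : ∀ t : ℝ,
      (fun v => (NormedSpace.exp (t • (!![1,1,0;0,1,0;0,0,0] : Matrix (Fin 3) (Fin 3) ℝ))).mulVec v) '' K = K) :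
    ConeIso K ExpCone := by
  classical
  obtain ⟨hcl, hconv, hsc, hint, hpt⟩ := hK
  have hEmem : ∀ t : ℝ, ∀ v ∈ K,
      (![Real.exp t * v 0 + t * Real.exp t * v 1, Real.exp t * v 1, v 2] : Fin 3 → ℝ) ∈ K := by
    intro t v hv
    have h1 := Set.mem_image_of_mem
      (fun v => (NormedSpace.exp (t • (!![1,1,0;0,1,0;0,0,0] : Matrix (Fin 3) (Fin 3) ℝ))).mulVec v) hv
    rw [hinv t] at h1
    simp only [exp_jordan, Emulvec] at h1
    exact h1
  have hTK : ∀ t : ℝ, ∀ v ∈ K, (![v 0 + t * v 1, v 1, Real.exp (-t) * v 2] : Fin 3 → ℝ) ∈ K := by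
    intro t v hv
    refine memK_congr (hsc (Real.exp (-t)) (Real.exp_pos _) _ (hEmem t v hv)) fun i => ?_
    fin_cases i <;>
      simp only [Pi.smul_apply, smul_eq_mul, Fin.zero_eta, Fin.mk_one, Fin.reduceFinMk, v3_0, v3_1, v3_2, Real.exp_neg] <;>
      field_simp <;> ring
  have hE0K : ∀ v ∈ K, (![0, 0, v 2] : Fin 3 → ℝ) ∈ K := by
    intro v hv
    have htexp : Filter.Tendsto (fun t : ℝ => t * Real.exp t) Filter.atBot (nhds 0) := by
      have h3 := ((Real.tendsto_pow_mul_exp_neg_atTop_nhds_zero 1).comp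
        Filter.tendsto_neg_atBot_atTop).neg
      simp only [Function.comp_def, pow_one, neg_neg, neg_mul, neg_zero] at h3
      simpa using h3
    have htd : Filter.Tendsto
        (fun t : ℝ => (![Real.exp t * v 0 + t * Real.exp t * v 1, Real.exp t * v 1, v 2] : Fin 3 → ℝ))
        Filter.atBot (nhds ![0,0,v 2]) := by
      rw [tendsto_pi_nhds]
      intro i; fin_cases i
      · simpa [v3_0] using (Real.tendsto_exp_atBot.mul_const (v 0)).add (htexp.mul_const (v 1))
      · simpa [v3_1] using Real.tendsto_exp_atBot.mul_const (v 1)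
      · simpa [v3_2] using (tendsto_const_nhds : Filter.Tendsto (fun _ : ℝ => v 2) Filter.atBot (nhds (v 2)))
    exact hcl.mem_of_tendsto htd (Filter.Eventually.of_forall fun t => hEmem t v hv)
  have hrayK : ∀ v ∈ K, (![v 1, 0, 0] : Fin 3 → ℝ) ∈ K := by
    intro v hv
    have hmem : ∀ t : ℝ, 0 < t →
        t⁻¹ • (![v 0 + t * v 1, v 1, Real.exp (-t) * v 2] : Fin 3 → ℝ) ∈ K :=
      fun t ht => hsc _ (inv_pos.mpr ht) _ (hTK t v hv)
    have htd : Filter.Tendsto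
        (fun t : ℝ => t⁻¹ • (![v 0 + t * v 1, v 1, Real.exp (-t) * v 2] : Fin 3 → ℝ))
        Filter.atTop (nhds ![v 1, 0, 0]) := by
      rw [tendsto_pi_nhds]
      intro i; fin_cases i
      · have h1 : Filter.Tendsto (fun t : ℝ => t⁻¹ * v 0 + v 1) Filter.atTop (nhds (v 1)) := by
          simpa using (tendsto_inv_atTop_zero.mul_const (v 0)).add_const (v 1)
        refine Filter.Tendsto.congr' ?_ (by simpa [v3_1] using h1)
        filter_upwards [Filter.eventually_gt_atTop (0:ℝ)] with t ht
        simp only [Pi.smul_apply, smul_eq_mul, Fin.zero_eta, v3_0]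
        field_simp
      · simpa [v3_1] using tendsto_inv_atTop_zero.mul_const (v 1)
      · have h2 : Filter.Tendsto (fun t : ℝ => t⁻¹ * (Real.exp (-t) * v 2))
            Filter.atTop (nhds 0) := by
          have h3 := tendsto_inv_atTop_zero.mul
            ((Real.tendsto_exp_atBot.comp Filter.tendsto_neg_atTop_atBot).mul_const (v 2))
          simpa using h3
        simpa [v3_2] using h2
    exact hcl.mem_of_tendsto htd ((Filter.eventually_gt_atTop 0).mono fun t ht => hmem t ht)
  -- sign normalization
  have hey : ∃ e : ℝ, (e = 1 ∨ e = -1) ∧ ∀ v ∈ K, 0 ≤ e * v 1 := by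
    by_cases hneg : ∃ v ∈ K, v 1 < 0
    · obtain ⟨w, hw, hw1⟩ := hneg
      refine ⟨-1, Or.inr rfl, fun v hv => ?_⟩
      rcases le_or_gt (v 1) 0 with h | h
      · nlinarith
      · exfalso
        have hA : (![1,0,0] : Fin 3 → ℝ) ∈ K := by
          refine memK_congr (hsc (v 1)⁻¹ (inv_pos.mpr h) _ (hrayK v hv)) fun i => ?_
          fin_cases i <;> simp [v3_0, v3_1, v3_2, inv_mul_cancel₀ h.ne']
        have hB : -(![1,0,0] : Fin 3 → ℝ) ∈ K := by
          refine memK_congr (hsc (-(w 1))⁻¹ (inv_pos.mpr (by linarith)) _ (hrayK w hw))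
            fun i => ?_
          have hwne : w 1 ≠ 0 := ne_of_lt hw1
          fin_cases i <;> simp [v3_0, v3_1, v3_2] <;> field_simp
        have h1 : (1:ℝ) = 0 := by simpa [v3_0] using congrFun (hpt _ hA hB) 0
        norm_num at h1
    · push_neg at hneg
      exact ⟨1, Or.inl rfl, fun v hv => by simpa using hneg v hv⟩
  have hez : ∃ d : ℝ, (d = 1 ∨ d = -1) ∧ ∀ v ∈ K, 0 ≤ d * v 2 := by
    by_cases hneg : ∃ v ∈ K, v 2 < 0
    · obtain ⟨w, hw, hw2⟩ := hneg
      refine ⟨-1, Or.inr rfl, fun v hv => ?_⟩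
      rcases le_or_gt (v 2) 0 with h | h
      · nlinarith
      · exfalso
        have hA : (![0,0,1] : Fin 3 → ℝ) ∈ K := by
          refine memK_congr (hsc (v 2)⁻¹ (inv_pos.mpr h) _ (hE0K v hv)) fun i => ?_
          fin_cases i <;> simp [v3_0, v3_1, v3_2, inv_mul_cancel₀ h.ne']
        have hB : -(![0,0,1] : Fin 3 → ℝ) ∈ K := by
          refine memK_congr (hsc (-(w 2))⁻¹ (inv_pos.mpr (by linarith)) _ (hE0K w hw))
            fun i => ?_
          have hwne : w 2 ≠ 0 := ne_of_lt hw2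
          fin_cases i <;> simp [v3_0, v3_1, v3_2] <;> field_simp
        have h1 : (1:ℝ) = 0 := by simpa [v3_2] using congrFun (hpt _ hA hB) 2
        norm_num at h1
    · push_neg at hneg
      exact ⟨1, Or.inl rfl, fun v hv => by simpa using hneg v hv⟩
  obtain ⟨e, he, heyK⟩ := hey
  obtain ⟨d, hd, hezK⟩ := hez
  have hee : e * e = 1 := by rcases he with h|h <;> rw [h] <;> norm_num
  have hdd : d * d = 1 := by rcases hd with h|h <;> rw [h] <;> norm_num
  set m : (Fin 3 → ℝ) → (Fin 3 → ℝ) := fun v => ![e * v 0, e * v 1, d * v 2] with hm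
  have hm0 : ∀ v, m v 0 = e * v 0 := fun v => rfl
  have hm1 : ∀ v, m v 1 = e * v 1 := fun v => rfl
  have hm2 : ∀ v, m v 2 = d * v 2 := fun v => rfl
  have hmm : ∀ v, m (m v) = v := by
    intro v; funext i; fin_cases i <;>
      simp [hm, v3_0, v3_1, v3_2, ← mul_assoc, hee, hdd, one_mul]
  have hminj : ∀ v w, m v = m w → v = w := by
    intro v w h
    have := congrArg m h
    rwa [hmm, hmm] at this
  have hmadd : ∀ v w, m (v + w) = m v + m w := by
    intro v w; funext i; fin_cases i <;>
      simp [hm, v3_0, v3_1, v3_2, Pi.add_apply] <;> ring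
  have hmsmul : ∀ (c : ℝ) (v), m (c • v) = c • m v := by
    intro c v; funext i; fin_cases i <;>
      simp [hm, v3_0, v3_1, v3_2, Pi.smul_apply, smul_eq_mul] <;> ring
  have hmneg : ∀ v, m (-v) = -(m v) := by
    intro v; funext i; fin_cases i <;>
      simp [hm, v3_0, v3_1, v3_2, Pi.neg_apply] <;> ring
  have hmcont : Continuous m := by
    apply continuous_pi; intro i; fin_cases i
    · simpa [hm, v3_0, Pi.mul_def] using continuous_const.mul (continuous_apply (0 : Fin 3))
    · simpa [hm, v3_1, Pi.mul_def] using continuous_const.mul (continuous_apply (1 : Fin 3))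
    · simpa [hm, v3_2, Pi.mul_def] using continuous_const.mul (continuous_apply (2 : Fin 3))
  set K' : Set (Fin 3 → ℝ) := m '' K with hK'def
  have himg : ∀ S : Set (Fin 3 → ℝ), m '' S = m ⁻¹' S := by
    intro S; ext x
    constructor
    · rintro ⟨w, hw, rfl⟩
      simpa [Set.mem_preimage, hmm] using hw
    · intro hx
      exact ⟨m x, hx, hmm x⟩
  have hmemK' : ∀ x, x ∈ K' ↔ m x ∈ K := by
    intro x; rw [hK'def, himg]; rfl
  have hmemK : ∀ x, x ∈ K ↔ m x ∈ K' := by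
    intro x; rw [hmemK' (m x), hmm]
  have hcl' : IsClosed K' := by
    rw [hK'def, himg]; exact hcl.preimage hmcont
  have hconv' : Convex ℝ K' := by
    rintro x hx y hy' a b ha hb hab
    obtain ⟨xx, hxx, rfl⟩ := hx
    obtain ⟨yy, hyy, rfl⟩ := hy'
    exact ⟨a • xx + b • yy, hconv hxx hyy ha hb hab,
      by rw [hmadd, hmsmul, hmsmul]⟩
  have hsc2 : ∀ c : ℝ, 0 < c → ∀ x ∈ K', c • x ∈ K' := by
    rintro c hc x ⟨w, hw, rfl⟩
    exact ⟨c • w, hsc c hc w hw, hmsmul c w⟩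
  have hint' : (interior K').Nonempty := by
    obtain ⟨u, hu⟩ := hint
    have hopen : IsOpen (m '' interior K) := by
      rw [himg]; exact isOpen_interior.preimage hmcont
    have hsub : m '' interior K ⊆ K' := Set.image_mono interior_subset
    exact ⟨m u, interior_maximal hsub hopen ⟨u, hu, rfl⟩⟩
  have hpt' : ∀ x ∈ K', -x ∈ K' → x = 0 := by
    rintro x ⟨w, hw, rfl⟩ hneg
    rw [hmemK'] at hneg
    rw [hmneg, hmm] at hneg
    rw [hpt w hw hneg]
    funext i; fin_cases i <;> simp [hm, v3_0, v3_1, v3_2]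
  have hT' : ∀ t : ℝ, ∀ v ∈ K', (![v 0 + t * v 1, v 1, Real.exp (-t) * v 2] : Fin 3 → ℝ) ∈ K' := by
    rintro t v ⟨w, hw, rfl⟩
    refine ⟨![w 0 + t * w 1, w 1, Real.exp (-t) * w 2], hTK t w hw, ?_⟩
    funext i; fin_cases i <;>
      simp [hm, v3_0, v3_1, v3_2] <;> ring
  have hE0' : ∀ v ∈ K', (![0, 0, v 2] : Fin 3 → ℝ) ∈ K' := by
    rintro v ⟨w, hw, rfl⟩
    refine ⟨![0, 0, w 2], hE0K w hw, ?_⟩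
    funext i; fin_cases i <;> simp [hm, v3_0, v3_1, v3_2]
  have hray' : ∀ v ∈ K', (![v 1, 0, 0] : Fin 3 → ℝ) ∈ K' := by
    rintro v ⟨w, hw, rfl⟩
    refine ⟨![w 1, 0, 0], hrayK w hw, ?_⟩
    funext i; fin_cases i <;> simp [hm, v3_0, v3_1, v3_2]
  have hy' : ∀ v ∈ K', 0 ≤ v 1 := by
    rintro v ⟨w, hw, rfl⟩; simpa [hm, v3_1] using heyK w hw
  have hz' : ∀ v ∈ K', 0 ≤ v 2 := by
    rintro v ⟨w, hw, rfl⟩; simpa [hm, v3_2] using hezK w hw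
  obtain ⟨l, hlpos, hchar⟩ := core K' hcl' hconv' hsc2 hint' hpt' hT' hE0' hray' hy' hz'
  -- final matrix
  have heno : e ≠ 0 := fun h0 => by rw [h0] at hee; norm_num at hee
  have hdno : d ≠ 0 := fun h0 => by rw [h0] at hdd; norm_num at hdd
  refine ⟨!![-e, 0, 0; 0, 0, d/l; 0, e, 0], ?_, ?_⟩
  · rw [Matrix.det_fin_three]
    simp
    exact ⟨⟨heno, hdno, hlpos.ne'⟩, heno⟩
  · have hSmul : ∀ v : Fin 3 → ℝ,
        (!![-e, 0, 0; 0, 0, d/l; 0, e, 0] : Matrix (Fin 3) (Fin 3) ℝ).mulVec v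
          = ![-e * v 0, d/l * v 2, e * v 1] := by
      intro v; funext i; fin_cases i <;>
        simp [Matrix.mulVec, dotProduct, Fin.sum_univ_three, v3_0, v3_1, v3_2]
    ext w
    simp only [Set.mem_image]
    constructor
    · rintro ⟨v, hv, rfl⟩
      have hv' := (hchar (m v)).mp ((hmemK v).mp hv)
      rw [hm0, hm1, hm2] at hv'
      show (!![-e, 0, 0; 0, 0, d/l; 0, e, 0] : Matrix (Fin 3) (Fin 3) ℝ).mulVec v ∈ ExpCone
      rw [hSmul]
      simp only [ExpCone, Set.mem_setOf_eq, v3_0, v3_1, v3_2]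
      rcases hv' with ⟨h1, h2, h3⟩ | ⟨h1, h2⟩
      · left
        refine ⟨h1, by linarith, ?_⟩
        rw [show d / l * v 2 = (d * v 2) / l by ring]
        exact div_nonneg h3 hlpos.le
      · right
        refine ⟨h1, ?_⟩
        have hne : -e * v 0 / (e * v 1) = -(e * v 0 / (e * v 1)) := by ring
        rw [hne, show d / l * v 2 = (d * v 2) / l by ring, le_div_iff₀ hlpos]
        calc e * v 1 * Real.exp (-(e * v 0 / (e * v 1))) * l
            = l * (e * v 1) * Real.exp (-(e * v 0 / (e * v 1))) := by ring
          _ ≤ d * v 2 := h2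
    · intro hw
      simp only [ExpCone, Set.mem_setOf_eq] at hw
      refine ⟨m ![-(w 0), w 2, l * w 1], ?_, ?_⟩
      · rw [hmemK, hmm, hchar]
        rcases hw with ⟨h1, h2, h3⟩ | ⟨h1, h2⟩
        · exact Or.inl ⟨by rw [v3_1]; exact h1, by rw [v3_0]; linarith,
            by rw [v3_2]; exact mul_nonneg hlpos.le h3⟩
        · refine Or.inr ⟨by rw [v3_1]; exact h1, ?_⟩
          rw [v3_0, v3_1, v3_2]
          rw [show -(-(w 0) / w 2) = w 0 / w 2 by ring]
          calc l * w 2 * Real.exp (w 0 / w 2) = l * (w 2 * Real.exp (w 0 / w 2)) := by ring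
            _ ≤ l * w 1 := mul_le_mul_of_nonneg_left h2 hlpos.le
      · show (!![-e, 0, 0; 0, 0, d/l; 0, e, 0] : Matrix (Fin 3) (Fin 3) ℝ).mulVec
            (m ![-(w 0), w 2, l * w 1]) = w
        rw [hSmul]
        show ![-e * (e * -(w 0)), d / l * (d * (l * w 1)), e * (e * w 2)] = w
        funext i; fin_cases i
        · show -e * (e * -(w 0)) = w 0
          linear_combination (w 0) * hee
        · show d / l * (d * (l * w 1)) = w 1
          field_simp
          linear_combination (w 1) * hdd
        · show e * (e * w 2) = w 2
          linear_combination (w 2) * hee
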